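/- Let ε ≥ 0, Δ > 0, 0 < Δ_P ≤ Δ. Let i ≤ −1, c ≤ −1, 0 ≤ r̂ ≤ r < Δ with r − r̂ ≤ Δ_P. Let a, b, e, p, m, q be reals with |a − Φ⁻(i)| ≤ ε, |b − (Φ⁻)'(i)| ≤ ε, |e − E⁻(i, Δ)| ≤ ε, |p − Q⁻(c, r̂)| ≤ ε, |p| ≤ 1, |m − r·b| ≤ ε, |q − e·p| ≤ ε. Then the error-correction approximation a − m + q of Φ⁻(i − r) satisfies |Φ⁻(i − r) − (a − m + q)| ≤ (4 + Δ)·ε + (−E⁻(−1, Δ))·(Q_R + Q_I + ε), where Q_R = Q⁻_max(r*) − Q⁻_inf(r*) with Q⁻_max(r) = Q⁻(−1, r), Q⁻_inf(r) = (2^{−r} + r·ln 2 − 1)/(2^{−Δ} + Δ·ln 2 − 1), r* = log₂( (2X·ln X − X·ln(2X − 1)) / (2X·ln X − 2X·ln(2X − 1) + 2X − 2) ) with X = 2^Δ, and Q_I = 1 − Q⁻_inf(Δ − Δ_P). -/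

import Mathlib

/-- Φ⁻(x) = log₂(1 − 2^x) -/
noncomputable def Phim (x : ℝ) : ℝ := Real.logb 2 (1 - (2:ℝ) ^ x)

/-- (Φ⁻)'(x) = −2^x / (1 − 2^x) -/
noncomputable def dPhim (x : ℝ) : ℝ := -(2:ℝ) ^ x / (1 - (2:ℝ) ^ x)

/-- First-order Taylor remainder E⁻(i, r) -/
noncomputable def Em (i r : ℝ) : ℝ := Phim (i - r) - Phim i + r * dPhim i

/-- Error ratio Q⁻(i, r) = E⁻(i, r)/E⁻(i, Δ) -/
noncomputable def Qm (Δ i r : ℝ) : ℝ := Em i r / Em i Δ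

/-- Q⁻_inf(r) = (2^{−r} + r·ln 2 − 1)/(2^{−Δ} + Δ·ln 2 − 1) -/
noncomputable def QmInf (Δ r : ℝ) : ℝ :=
  ((2:ℝ) ^ (-r) + r * Real.log 2 - 1) / ((2:ℝ) ^ (-Δ) + Δ * Real.log 2 - 1)

/-- Q⁻_max(r) = Q⁻(−1, r) -/
noncomputable def QmMax (Δ r : ℝ) : ℝ := Qm Δ (-1) r

/-- r* for the subtraction case, with X = 2^Δ -/
noncomputable def rStarM (Δ : ℝ) : ℝ :=
  Real.logb 2
    ((2 * (2:ℝ) ^ Δ * Real.log ((2:ℝ) ^ Δ) - (2:ℝ) ^ Δ * Real.log (2 * (2:ℝ) ^ Δ - 1)) /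
      (2 * (2:ℝ) ^ Δ * Real.log ((2:ℝ) ^ Δ) - 2 * (2:ℝ) ^ Δ * Real.log (2 * (2:ℝ) ^ Δ - 1)
        + 2 * (2:ℝ) ^ Δ - 2))

namespace LNSaux

noncomputable def fm (r : ℝ) : ℝ := (2:ℝ) ^ (-r) + r * Real.log 2 - 1

lemma L_pos : (0:ℝ) < Real.log 2 := Real.log_pos (by norm_num)

lemma rp_pos (x : ℝ) : (0:ℝ) < (2:ℝ) ^ x := Real.rpow_pos_of_pos (by norm_num) x

lemma rp_lt_one {x : ℝ} (h : x < 0) : (2:ℝ) ^ x < 1 :=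
  Real.rpow_lt_one_of_one_lt_of_neg (by norm_num) h

lemma one_sub_rp_pos {x : ℝ} (h : x < 0) : 0 < 1 - (2:ℝ) ^ x := by
  linarith [rp_lt_one h]

lemma rp_le_one {x : ℝ} (h : x ≤ 0) : (2:ℝ) ^ x ≤ 1 := by
  rcases eq_or_lt_of_le h with h|h
  · simp [h]
  · exact (rp_lt_one h).le

lemma rp_add (x y : ℝ) : (2:ℝ) ^ (x + y) = (2:ℝ) ^ x * (2:ℝ) ^ y :=
  Real.rpow_add (by norm_num) x y

lemma rp_sub (x y : ℝ) : (2:ℝ) ^ (x - y) = (2:ℝ) ^ x * (2:ℝ) ^ (-y) := by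
  rw [sub_eq_add_neg, rp_add]

lemma hasDerivAt_rp (x : ℝ) :
    HasDerivAt (fun y => (2:ℝ) ^ y) ((2:ℝ) ^ x * Real.log 2) x :=
  (Real.hasStrictDerivAt_const_rpow (by norm_num) x).hasDerivAt

lemma hasDerivAt_Phim {x : ℝ} (h : x < 0) : HasDerivAt Phim (dPhim x) x := by
  have h1 : HasDerivAt (fun y => 1 - (2:ℝ) ^ y) (-((2:ℝ) ^ x * Real.log 2)) x :=
    (hasDerivAt_rp x).const_sub 1
  have h2 := h1.log (ne_of_gt (one_sub_rp_pos h))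
  have h3 : HasDerivAt (fun y => Real.log (1 - (2:ℝ) ^ y) / Real.log 2)
      (-((2:ℝ) ^ x * Real.log 2) / (1 - (2:ℝ) ^ x) / Real.log 2) x := h2.div_const _
  have : Phim = fun y => Real.log (1 - (2:ℝ) ^ y) / Real.log 2 := by
    funext y; rw [Phim, Real.logb]
  rw [this]
  convert h3 using 1
  rw [dPhim]
  field_simp [(one_sub_rp_pos h).ne', L_pos.ne']

lemma hasDerivAt_dPhim {x : ℝ} (h : x < 0) :
    HasDerivAt dPhim (-(2:ℝ) ^ x * Real.log 2 / (1 - (2:ℝ) ^ x) ^ 2) x := by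
  have h1 : HasDerivAt (fun y => -(2:ℝ) ^ y) (-((2:ℝ) ^ x * Real.log 2)) x :=
    (hasDerivAt_rp x).neg
  have h2 : HasDerivAt (fun y => 1 - (2:ℝ) ^ y) (-((2:ℝ) ^ x * Real.log 2)) x :=
    (hasDerivAt_rp x).const_sub 1
  have h3 := h1.div h2 (ne_of_gt (one_sub_rp_pos h))
  have : dPhim = fun y => -(2:ℝ) ^ y / (1 - (2:ℝ) ^ y) := by funext y; rfl
  rw [this]
  refine h3.congr_deriv ?_
  have h4 := one_sub_rp_pos h
  rw [div_left_inj' (pow_ne_zero 2 h4.ne')]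
  ring

lemma hasDerivAt_Em {i : ℝ} (hi : i < 0) {r : ℝ} (hr : 0 ≤ r) :
    HasDerivAt (fun s => Em i s) (dPhim i - dPhim (i - r)) r := by
  have hir : i - r < 0 := by linarith
  have h1 : HasDerivAt (fun s : ℝ => i - s) (-1) r := by
    simpa using (hasDerivAt_id r).const_sub i
  have h2 : HasDerivAt (fun s => Phim (i - s)) (dPhim (i - r) * (-1)) r :=
    (hasDerivAt_Phim hir).comp r h1
  have h3 : HasDerivAt (fun s : ℝ => s * dPhim i) (dPhim i) r := by
    simpa using (hasDerivAt_id r).mul_const (dPhim i)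
  have : (fun s => Em i s) = fun s => Phim (i - s) - Phim i + s * dPhim i := by
    funext s; rfl
  rw [this]
  refine ((h2.sub_const (Phim i)).add h3).congr_deriv ?_
  ring

lemma hasDerivAt_fm (r : ℝ) :
    HasDerivAt fm (Real.log 2 * (1 - (2:ℝ) ^ (-r))) r := by
  have h1 : HasDerivAt (fun s : ℝ => -s) (-1) r := by simpa using hasDerivAt_neg' r
  have h2 : HasDerivAt (fun s : ℝ => (2:ℝ) ^ (-s)) ((2:ℝ) ^ (-r) * Real.log 2 * (-1)) r :=
    (hasDerivAt_rp (-r)).comp r h1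
  have h3 : HasDerivAt (fun s : ℝ => s * Real.log 2) (Real.log 2) r := by
    simpa using (hasDerivAt_id r).mul_const (Real.log 2)
  have : fm = fun s => (2:ℝ) ^ (-s) + s * Real.log 2 - 1 := by funext s; rfl
  rw [this]
  refine ((h2.add h3).sub_const 1).congr_deriv ?_
  ring


lemma rp_mono {x y : ℝ} (h : x ≤ y) : (2:ℝ) ^ x ≤ (2:ℝ) ^ y :=
  Real.rpow_le_rpow_of_exponent_le (by norm_num) h

lemma dPhim_le {x y : ℝ} (hxy : x ≤ y) (hy : y < 0) : dPhim y ≤ dPhim x := by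
  have hx1 : (2:ℝ) ^ x ≤ (2:ℝ) ^ y := rp_mono hxy
  have h1 : 0 < 1 - (2:ℝ) ^ y := one_sub_rp_pos hy
  have h2 : 0 < 1 - (2:ℝ) ^ x := by linarith
  rw [dPhim, dPhim, div_le_div_iff₀ h1 h2]
  nlinarith [rp_pos x, rp_pos y]

/-- closed form for the r-derivative of Em -/
lemma Er_eq {i s : ℝ} (hi : i < 0) (hs : 0 ≤ s) :
    dPhim i - dPhim (i - s) =
      (2:ℝ) ^ i * ((2:ℝ) ^ (-s) - 1) / ((1 - (2:ℝ) ^ i) * (1 - (2:ℝ) ^ i * (2:ℝ) ^ (-s))) := by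
  have his : i - s < 0 := by linarith
  have h1 : 0 < 1 - (2:ℝ) ^ i := one_sub_rp_pos hi
  have h2 : 0 < 1 - (2:ℝ) ^ (i - s) := one_sub_rp_pos his
  rw [dPhim, dPhim, rp_sub] at *
  field_simp
  ring

lemma Er_m1_eq {s : ℝ} (hs : 0 ≤ s) :
    dPhim (-1) - dPhim (-1 - s) =
      ((2:ℝ) ^ (-s) - 1) / (1 - (2:ℝ) ^ (-s) / 2) := by
  have h := Er_eq (i := -1) (by norm_num) hs
  have hh : (2:ℝ) ^ (-1 : ℝ) = 1/2 := by
    rw [Real.rpow_neg_one]; norm_num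
  rw [h, hh]
  have hs1 : (2:ℝ) ^ (-s) ≤ 1 := rp_le_one (by linarith)
  have hs0 : (0:ℝ) < (2:ℝ) ^ (-s) := rp_pos _
  rw [div_eq_div_iff (by nlinarith) (by nlinarith)]
  ring

lemma Er_nonpos {i s : ℝ} (hi : i < 0) (hs : 0 ≤ s) : dPhim i - dPhim (i - s) ≤ 0 := by
  have := dPhim_le (x := i - s) (y := i) (by linarith) hi
  linarith

lemma Er_neg {i s : ℝ} (hi : i < 0) (hs : 0 < s) : dPhim i - dPhim (i - s) < 0 := by
  rw [Er_eq hi hs.le]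
  have h1 : 0 < 1 - (2:ℝ) ^ i := one_sub_rp_pos hi
  have h2 : (2:ℝ) ^ (-s) < 1 := rp_lt_one (by linarith)
  have h3 : 0 < (2:ℝ) ^ (-s) := rp_pos _
  have h4 : 0 < (2:ℝ) ^ i := rp_pos _
  have h5 : (2:ℝ) ^ i < 1 := rp_lt_one hi
  have h6 : 0 < 1 - (2:ℝ) ^ i * (2:ℝ) ^ (-s) := by nlinarith
  apply div_neg_of_neg_of_pos
  · nlinarith
  · exact mul_pos h1 h6

/-- monotonicity of the ratio Er/f' (cross-multiplied) -/
lemma key1 {i s1 s2 : ℝ} (hi : i < 0) (h1 : 0 ≤ s1) (h12 : s1 ≤ s2) :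
    (dPhim i - dPhim (i - s1)) * (Real.log 2 * (1 - (2:ℝ) ^ (-s2))) ≤
      (dPhim i - dPhim (i - s2)) * (Real.log 2 * (1 - (2:ℝ) ^ (-s1))) := by
  have h2 : (0:ℝ) ≤ s2 := le_trans h1 h12
  rw [Er_eq hi h1, Er_eq hi h2]
  set u := (2:ℝ) ^ i with hu
  set t1 := (2:ℝ) ^ (-s1) with ht1
  set t2 := (2:ℝ) ^ (-s2) with ht2
  have hu0 : 0 < u := rp_pos _
  have hu1 : u < 1 := rp_lt_one hi
  have ht20 : 0 < t2 := rp_pos _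
  have ht21 : t2 ≤ t1 := rp_mono (by linarith)
  have ht11 : t1 ≤ 1 := rp_le_one (by linarith)
  have hut1 : 0 < 1 - u * t1 := by nlinarith
  have hut2 : 0 < 1 - u * t2 := by nlinarith
  have hL : 0 < Real.log 2 := L_pos
  have hu1' : 0 < 1 - u := by linarith
  rw [div_mul_eq_mul_div, div_mul_eq_mul_div,
    div_le_div_iff₀ (mul_pos hu1' hut1) (mul_pos hu1' hut2)]
  nlinarith [mul_nonneg (mul_nonneg (mul_nonneg (mul_nonneg
    (mul_nonneg (mul_nonneg hu0.le hu0.le) hL.le) (by linarith : (0:ℝ) ≤ 1 - u))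
    (by linarith : (0:ℝ) ≤ 1 - t1)) (by linarith : (0:ℝ) ≤ 1 - t2))
    (by linarith : (0:ℝ) ≤ t1 - t2)]

/-- monotonicity of the ratio Er(i,·)/Er(-1,·) (cross-multiplied) -/
lemma key2 {i s1 s2 : ℝ} (hi : i ≤ -1) (h1 : 0 ≤ s1) (h12 : s1 ≤ s2) :
    (dPhim i - dPhim (i - s1)) * (dPhim (-1) - dPhim (-1 - s2)) ≤
      (dPhim i - dPhim (i - s2)) * (dPhim (-1) - dPhim (-1 - s1)) := by
  have hi0 : i < 0 := by linarith
  have h2 : (0:ℝ) ≤ s2 := le_trans h1 h12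
  rw [Er_eq hi0 h1, Er_eq hi0 h2, Er_m1_eq h1, Er_m1_eq h2]
  set u := (2:ℝ) ^ i with hu
  set t1 := (2:ℝ) ^ (-s1) with ht1
  set t2 := (2:ℝ) ^ (-s2) with ht2
  have hu0 : 0 < u := rp_pos _
  have hu1 : u ≤ 1/2 := by
    have : (2:ℝ) ^ i ≤ (2:ℝ) ^ (-1:ℝ) := rp_mono hi
    rw [Real.rpow_neg_one] at this; norm_num at this; linarith
  have ht20 : 0 < t2 := rp_pos _
  have ht21 : t2 ≤ t1 := rp_mono (by linarith)
  have ht11 : t1 ≤ 1 := rp_le_one (by linarith)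
  have hut1 : 0 < 1 - u * t1 := by nlinarith
  have hut2 : 0 < 1 - u * t2 := by nlinarith
  have hu1' : 0 < 1 - u := by linarith
  have hd1 : 0 < 1 - t1 / 2 := by linarith
  have hd2 : 0 < 1 - t2 / 2 := by linarith
  rw [div_mul_div_comm, div_mul_div_comm,
    div_le_div_iff₀ (mul_pos (mul_pos hu1' hut1) hd2) (mul_pos (mul_pos hu1' hut2) hd1)]
  nlinarith [mul_nonneg (mul_nonneg (mul_nonneg (mul_nonneg
    (mul_nonneg hu0.le hu1'.le) (by linarith : (0:ℝ) ≤ 1 - t1))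
    (by linarith : (0:ℝ) ≤ 1 - t2)) (by linarith : (0:ℝ) ≤ t1 - t2))
    (by linarith : (0:ℝ) ≤ 1/2 - u)]

lemma Em_zero (i : ℝ) : Em i 0 = 0 := by simp [Em]

lemma fm_zero : fm 0 = 0 := by simp [fm]


/-- f A ≤ f B when f' ≥ 0 on the interior -/
lemma le_of_deriv_nonneg {f f' : ℝ → ℝ} {A B : ℝ} (hAB : A ≤ B)
    (hd : ∀ x ∈ Set.Icc A B, HasDerivAt f (f' x) x)
    (h0 : ∀ x ∈ Set.Ioo A B, 0 ≤ f' x) : f A ≤ f B := by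
  have hm : MonotoneOn f (Set.Icc A B) := by
    apply monotoneOn_of_deriv_nonneg (convex_Icc A B)
    · exact fun x hx => (hd x hx).continuousAt.continuousWithinAt
    · intro x hx
      rw [interior_Icc] at hx
      exact ((hd x (Set.Ioo_subset_Icc_self hx)).differentiableAt).differentiableWithinAt
    · intro x hx
      rw [interior_Icc] at hx
      rw [(hd x (Set.Ioo_subset_Icc_self hx)).deriv]
      exact h0 x hx
  exact hm (Set.left_mem_Icc.2 hAB) (Set.right_mem_Icc.2 hAB) hAB

lemma le_of_deriv_nonpos {f f' : ℝ → ℝ} {A B : ℝ} (hAB : A ≤ B)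
    (hd : ∀ x ∈ Set.Icc A B, HasDerivAt f (f' x) x)
    (h0 : ∀ x ∈ Set.Ioo A B, f' x ≤ 0) : f B ≤ f A := by
  have hm : AntitoneOn f (Set.Icc A B) := by
    apply antitoneOn_of_deriv_nonpos (convex_Icc A B)
    · exact fun x hx => (hd x hx).continuousAt.continuousWithinAt
    · intro x hx
      rw [interior_Icc] at hx
      exact ((hd x (Set.Ioo_subset_Icc_self hx)).differentiableAt).differentiableWithinAt
    · intro x hx
      rw [interior_Icc] at hx
      rw [(hd x (Set.Ioo_subset_Icc_self hx)).deriv]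
      exact h0 x hx
  exact hm (Set.left_mem_Icc.2 hAB) (Set.right_mem_Icc.2 hAB) hAB

lemma lt_of_deriv_neg {f f' : ℝ → ℝ} {A B : ℝ} (hAB : A < B)
    (hd : ∀ x ∈ Set.Icc A B, HasDerivAt f (f' x) x)
    (h0 : ∀ x ∈ Set.Ioo A B, f' x < 0) : f B < f A := by
  have hm : StrictAntiOn f (Set.Icc A B) := by
    apply strictAntiOn_of_deriv_neg (convex_Icc A B)
    · exact fun x hx => (hd x hx).continuousAt.continuousWithinAt
    · intro x hx
      rw [interior_Icc] at hx
      rw [(hd x (Set.Ioo_subset_Icc_self hx)).deriv]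
      exact h0 x hx
  exact hm (Set.left_mem_Icc.2 hAB.le) (Set.right_mem_Icc.2 hAB.le) hAB

lemma Em_neg {i s : ℝ} (hi : i < 0) (hs : 0 < s) : Em i s < 0 := by
  have h := lt_of_deriv_neg (f := fun x => Em i x)
    (f' := fun x => dPhim i - dPhim (i - x)) (A := 0) (B := s) hs
    (fun x hx => hasDerivAt_Em hi hx.1)
    (fun x hx => Er_neg hi hx.1)
  have h' : Em i s < Em i 0 := h
  rw [Em_zero] at h'
  exact h'

lemma fm_mono {r1 r2 : ℝ} (h0 : 0 ≤ r1) (h12 : r1 ≤ r2) : fm r1 ≤ fm r2 := by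
  apply le_of_deriv_nonneg (f' := fun x => Real.log 2 * (1 - (2:ℝ) ^ (-x))) h12
    (fun x hx => hasDerivAt_fm x)
  intro x hx
  have : (2:ℝ) ^ (-x) < 1 := rp_lt_one (by cases hx; linarith)
  have := L_pos
  nlinarith

lemma fm_pos {r : ℝ} (hr : 0 < r) : 0 < fm r := by
  have h := lt_of_deriv_neg (f := fun x => -fm x)
    (f' := fun x => -(Real.log 2 * (1 - (2:ℝ) ^ (-x)))) (A := 0) (B := r) hr
    (fun x hx => (hasDerivAt_fm x).neg)
    (fun x hx => by
      show -(Real.log 2 * (1 - (2:ℝ) ^ (-x))) < 0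
      have : (2:ℝ) ^ (-x) < 1 := rp_lt_one (by cases hx; linarith)
      have := L_pos
      nlinarith)
  have h' : -fm r < -fm 0 := h
  rw [fm_zero] at h'
  linarith

lemma fm_nonneg {r : ℝ} (hr : 0 ≤ r) : 0 ≤ fm r := by
  rcases eq_or_lt_of_le hr with h|h
  · rw [← h, fm_zero]
  · exact (fm_pos h).le

lemma fm_increment {rh r Δ : ℝ} (h0 : 0 ≤ rh) (h1 : rh ≤ r) (h2 : r ≤ Δ) :
    fm r - fm rh ≤ fm Δ - fm (Δ - (r - rh)) := by
  set d := r - rh with hd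
  have hd0 : 0 ≤ d := by simp [hd]; linarith
  have key := le_of_deriv_nonneg (f := fun x => fm (x + d) - fm x)
    (f' := fun x => Real.log 2 * (1 - (2:ℝ) ^ (-(x + d))) - Real.log 2 * (1 - (2:ℝ) ^ (-x)))
    (A := rh) (B := Δ - d) (by simp [hd]; linarith)
    (fun x hx => ((hasDerivAt_fm (x + d)).comp_add_const x d).sub (hasDerivAt_fm x))
    (fun x hx => by
      show 0 ≤ Real.log 2 * (1 - (2:ℝ) ^ (-(x + d))) - Real.log 2 * (1 - (2:ℝ) ^ (-x))
      have h := rp_mono (show -(x + d) ≤ -x by linarith)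
      nlinarith [L_pos])
  have e1 : Δ - d + d = Δ := by ring
  have e2 : rh + d = r := by simp [hd]
  simpa [e1, e2] using key

lemma lowerQ {i r Δ : ℝ} (hi : i < 0) (hr0 : 0 ≤ r) (hrΔ : r ≤ Δ) :
    Em i r * fm Δ ≤ Em i Δ * fm r := by
  rcases eq_or_lt_of_le hr0 with h|hr0'
  · rw [← h, Em_zero, fm_zero, zero_mul, mul_zero]
  have hfr : 0 < Real.log 2 * (1 - (2:ℝ) ^ (-r)) := by
    have : (2:ℝ) ^ (-r) < 1 := rp_lt_one (by linarith)
    nlinarith [L_pos]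
  have hfΔ : 0 < fm Δ := fm_pos (by linarith)
  set ψ : ℝ → ℝ := fun s => Em i s * fm Δ - Em i Δ * fm s with hψ
  have hψd : ∀ x ∈ Set.Icc 0 (max r Δ), HasDerivAt ψ
      ((dPhim i - dPhim (i - x)) * fm Δ - Em i Δ * (Real.log 2 * (1 - (2:ℝ) ^ (-x)))) x := by
    intro x hx
    exact ((hasDerivAt_Em hi hx.1).mul_const (fm Δ)).sub ((hasDerivAt_fm x).const_mul (Em i Δ))
  have hψ0 : ψ 0 = 0 := by simp [hψ, Em_zero, fm_zero]
  have hψΔ : ψ Δ = 0 := by simp only [hψ]; ring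
  have hgoal : ψ r ≤ 0 := by
    by_cases hC : (dPhim i - dPhim (i - r)) * fm Δ - Em i Δ * (Real.log 2 * (1 - (2:ℝ) ^ (-r))) ≤ 0
    · -- antitone on [0, r]
      have := le_of_deriv_nonpos (A := 0) (B := r)
        (f' := fun x => (dPhim i - dPhim (i - x)) * fm Δ - Em i Δ * (Real.log 2 * (1 - (2:ℝ) ^ (-x)))) hr0
        (fun x hx => hψd x ⟨hx.1, le_trans hx.2 (le_max_left _ _)⟩)
        (fun x hx => by
          show (dPhim i - dPhim (i - x)) * fm Δ - Em i Δ * (Real.log 2 * (1 - (2:ℝ) ^ (-x))) ≤ 0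
          have hk := key1 (s2 := r) hi hx.1.le hx.2.le
          have hfx : 0 < Real.log 2 * (1 - (2:ℝ) ^ (-x)) := by
            have : (2:ℝ) ^ (-x) < 1 := rp_lt_one (by simp; linarith [hx.1])
            nlinarith [L_pos]
          have hchain : (Real.log 2 * (1 - (2:ℝ) ^ (-r))) * ((dPhim i - dPhim (i - x)) * fm Δ) ≤
              (Real.log 2 * (1 - (2:ℝ) ^ (-r))) * (Em i Δ * (Real.log 2 * (1 - (2:ℝ) ^ (-x)))) := by
            nlinarith [mul_le_mul_of_nonneg_right hC hfx.le,
              mul_le_mul_of_nonneg_right hk hfΔ.le]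
          have := le_of_mul_le_mul_left hchain hfr
          linarith)
      rw [hψ0] at this
      exact this
    · push_neg at hC
      have := le_of_deriv_nonneg (A := r) (B := Δ)
        (f' := fun x => (dPhim i - dPhim (i - x)) * fm Δ - Em i Δ * (Real.log 2 * (1 - (2:ℝ) ^ (-x)))) hrΔ
        (fun x hx => hψd x ⟨le_trans hr0 hx.1, le_trans hx.2 (le_max_right _ _)⟩)
        (fun x hx => by
          show 0 ≤ (dPhim i - dPhim (i - x)) * fm Δ - Em i Δ * (Real.log 2 * (1 - (2:ℝ) ^ (-x)))
          have hk := key1 (s1 := r) (s2 := x) hi hr0 hx.1.le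
          have hfx : 0 < Real.log 2 * (1 - (2:ℝ) ^ (-x)) := by
            have : (2:ℝ) ^ (-x) < 1 := rp_lt_one (by simp; linarith [hx.1])
            nlinarith [L_pos]
          have hchain : (Real.log 2 * (1 - (2:ℝ) ^ (-r))) * (Em i Δ * (Real.log 2 * (1 - (2:ℝ) ^ (-x)))) ≤
              (Real.log 2 * (1 - (2:ℝ) ^ (-r))) * ((dPhim i - dPhim (i - x)) * fm Δ) := by
            nlinarith [mul_le_mul_of_nonneg_right hC.le hfx.le,
              mul_le_mul_of_nonneg_right hk hfΔ.le]
          have := le_of_mul_le_mul_left hchain hfr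
          linarith)
      rw [hψΔ] at this
      exact this
  simp only [hψ] at hgoal
  linarith

lemma upperQ {i r Δ : ℝ} (hi : i ≤ -1) (hr0 : 0 ≤ r) (hrΔ : r ≤ Δ) (hΔ : 0 < Δ) :
    Em i r * Em (-1) Δ ≤ Em (-1) r * Em i Δ := by
  have hi0 : i < 0 := by linarith
  rcases eq_or_lt_of_le hr0 with h|hr0'
  · rw [← h, Em_zero, Em_zero, zero_mul, zero_mul]
  have hEmΔ : Em (-1) Δ < 0 := Em_neg (by norm_num) hΔ
  have hEiΔ : Em i Δ < 0 := Em_neg hi0 hΔ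
  have hErr : dPhim (-1) - dPhim (-1 - r) < 0 := Er_neg (by norm_num) hr0'
  set ψ : ℝ → ℝ := fun s => Em i s * Em (-1) Δ - Em (-1) s * Em i Δ with hψ
  have hψd : ∀ x ∈ Set.Icc 0 (max r Δ), HasDerivAt ψ
      ((dPhim i - dPhim (i - x)) * Em (-1) Δ -
        (dPhim (-1) - dPhim (-1 - x)) * Em i Δ) x := by
    intro x hx
    exact ((hasDerivAt_Em hi0 hx.1).mul_const (Em (-1) Δ)).sub
      ((hasDerivAt_Em (by norm_num) hx.1).mul_const (Em i Δ))
  have hψ0 : ψ 0 = 0 := by simp [hψ, Em_zero]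
  have hψΔ : ψ Δ = 0 := by simp only [hψ]; ring
  have hgoal : ψ r ≤ 0 := by
    by_cases hC : (dPhim i - dPhim (i - r)) * Em (-1) Δ -
        (dPhim (-1) - dPhim (-1 - r)) * Em i Δ ≤ 0
    · have := le_of_deriv_nonpos (A := 0) (B := r)
        (f' := fun x => (dPhim i - dPhim (i - x)) * Em (-1) Δ -
          (dPhim (-1) - dPhim (-1 - x)) * Em i Δ) hr0
        (fun x hx => hψd x ⟨hx.1, le_trans hx.2 (le_max_left _ _)⟩)
        (fun x hx => by
          show (dPhim i - dPhim (i - x)) * Em (-1) Δ - (dPhim (-1) - dPhim (-1 - x)) * Em i Δ ≤ 0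
          have hk := key2 (s2 := r) hi hx.1.le hx.2.le
          have hErx : dPhim (-1) - dPhim (-1 - x) < 0 := Er_neg (by norm_num) hx.1
          have hchain : (-(dPhim (-1) - dPhim (-1 - r))) *
              ((dPhim i - dPhim (i - x)) * Em (-1) Δ) ≤
              (-(dPhim (-1) - dPhim (-1 - r))) *
              ((dPhim (-1) - dPhim (-1 - x)) * Em i Δ) := by
            nlinarith [mul_le_mul_of_nonpos_right hk hEmΔ.le,
              mul_le_mul_of_nonpos_right hC hErx.le]
          have := le_of_mul_le_mul_left hchain (by linarith)
          linarith)
      rw [hψ0] at this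
      exact this
    · push_neg at hC
      have := le_of_deriv_nonneg (A := r) (B := Δ)
        (f' := fun x => (dPhim i - dPhim (i - x)) * Em (-1) Δ -
          (dPhim (-1) - dPhim (-1 - x)) * Em i Δ) hrΔ
        (fun x hx => hψd x ⟨le_trans hr0 hx.1, le_trans hx.2 (le_max_right _ _)⟩)
        (fun x hx => by
          show 0 ≤ (dPhim i - dPhim (i - x)) * Em (-1) Δ - (dPhim (-1) - dPhim (-1 - x)) * Em i Δ
          have hk := key2 (s1 := r) (s2 := x) hi hr0 hx.1.le
          have hErx : dPhim (-1) - dPhim (-1 - x) < 0 :=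
            Er_neg (by norm_num) (lt_trans hr0' hx.1)
          have hchain : (-(dPhim (-1) - dPhim (-1 - r))) *
              ((dPhim (-1) - dPhim (-1 - x)) * Em i Δ) ≤
              (-(dPhim (-1) - dPhim (-1 - r))) *
              ((dPhim i - dPhim (i - x)) * Em (-1) Δ) := by
            nlinarith [mul_le_mul_of_nonpos_right hk hEmΔ.le,
              mul_le_mul_of_nonpos_right hC.le hErx.le]
          have := le_of_mul_le_mul_left hchain (by linarith)
          linarith)
      rw [hψΔ] at this
      exact this
  simp only [hψ] at hgoal
  linarith

lemma one_sub_rp_le {Δ : ℝ} : 1 - (2:ℝ) ^ (-Δ) ≤ Δ * Real.log 2 := by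
  have h : (2:ℝ) ^ (-Δ) = Real.exp (Real.log 2 * (-Δ)) := by
    rw [Real.rpow_def_of_pos (by norm_num)]
  have h2 := Real.add_one_le_exp (Real.log 2 * (-Δ))
  rw [← h] at h2
  nlinarith

lemma Em_i_mono {i Δ : ℝ} (hi : i ≤ -1) (hΔ : 0 < Δ) : Em (-1) Δ ≤ Em i Δ := by
  have key := le_of_deriv_nonpos (A := i) (B := -1)
    (f := fun j => Em j Δ)
    (f' := fun j => dPhim (j - Δ) - dPhim j +
      Δ * (-(2:ℝ) ^ j * Real.log 2 / (1 - (2:ℝ) ^ j) ^ 2)) hi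
    (fun j hj => by
      have hj0 : j < 0 := by have := hj.2; linarith
      have hjΔ : j - Δ < 0 := by linarith
      have h1 : HasDerivAt (fun j => Phim (j - Δ)) (dPhim (j - Δ)) j := by
        exact (hasDerivAt_Phim hjΔ).comp_sub_const j Δ
      have h2 : HasDerivAt (fun j => Δ * dPhim j)
          (Δ * (-(2:ℝ) ^ j * Real.log 2 / (1 - (2:ℝ) ^ j) ^ 2)) j :=
        (hasDerivAt_dPhim hj0).const_mul Δ
      have : (fun j => Em j Δ) = fun j => Phim (j - Δ) - Phim j + Δ * dPhim j := by
        funext j; rw [Em]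
      rw [this]
      exact ((h1.sub (hasDerivAt_Phim hj0)).add h2).congr_deriv (by ring)
    )
    (fun j hj => by
      show dPhim (j - Δ) - dPhim j +
        Δ * (-(2:ℝ) ^ j * Real.log 2 / (1 - (2:ℝ) ^ j) ^ 2) ≤ 0
      have hj0 : j < 0 := by have := hj.2; linarith
      have hEr := Er_eq (s := Δ) hj0 hΔ.le
      set u := (2:ℝ) ^ j with hu
      set t := (2:ℝ) ^ (-Δ) with ht
      have hu0 : 0 < u := rp_pos _
      have hu1 : u < 1 := rp_lt_one hj0
      have ht0 : 0 < t := rp_pos _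
      have ht1 : t < 1 := rp_lt_one (by linarith)
      have hut : 0 < 1 - u * t := by nlinarith
      have hL := L_pos
      have hΔL : 1 - t ≤ Δ * Real.log 2 := one_sub_rp_le
      have heq : dPhim (j - Δ) - dPhim j = -(u * (t - 1) / ((1 - u) * (1 - u * t))) := by
        rw [← hEr]; ring
      rw [heq]
      have h1u : 0 < 1 - u := by linarith
      have hstep : (1 - t) * (1 - u) ≤ Δ * Real.log 2 * (1 - u * t) := by
        nlinarith [mul_le_mul_of_nonneg_right hΔL (by linarith : (0:ℝ) ≤ 1 - u),
          mul_nonneg (mul_nonneg (mul_pos hΔ hL).le hu0.le) (by linarith : (0:ℝ) ≤ 1 - t)]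
      have hmain : u * (1 - t) / ((1 - u) * (1 - u * t)) ≤
          Δ * u * Real.log 2 / (1 - u) ^ 2 := by
        rw [div_le_div_iff₀ (mul_pos h1u hut) (by positivity)]
        nlinarith [mul_le_mul_of_nonneg_left hstep (mul_pos hu0 h1u).le]
      have e1 : u * (1 - t) / ((1 - u) * (1 - u * t)) =
          -(u * (t - 1) / ((1 - u) * (1 - u * t))) := by ring
      have e2 : Δ * u * Real.log 2 / (1 - u) ^ 2 =
          -(Δ * (-u * Real.log 2 / (1 - u) ^ 2)) := by ring
      rw [e1, e2] at hmain
      linarith)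
  exact key

lemma X_pos {Δ : ℝ} : (0:ℝ) < (2:ℝ) ^ Δ := rp_pos Δ

lemma X_gt_one {Δ : ℝ} (hΔ : 0 < Δ) : 1 < (2:ℝ) ^ Δ :=
  Real.one_lt_rpow (by norm_num) hΔ

/-- numerator of r* as a function of X, with logs spelled out -/
lemma Nm_pos' {X : ℝ} (hX : 1 < X) : Real.log (2*X - 1) < 2 * Real.log X := by
  have h1 : 0 < 2*X - 1 := by linarith
  have h2 : 2*X - 1 < X * X := by nlinarith
  have := Real.log_lt_log h1 h2
  rwa [Real.log_mul (by linarith) (by linarith), ← two_mul] at this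

lemma mu_pos {X : ℝ} (hX : 1 < X) :
    0 < Real.log X - Real.log (2*X - 1) + 1 - 1/X := by
  have key := lt_of_deriv_neg (A := 1) (B := X)
    (f := fun x => -(Real.log x - Real.log (2*x - 1) + 1 - 1/x))
    (f' := fun x => -(x⁻¹ - 2/(2*x - 1) + (x^2)⁻¹)) hX
    (fun x hx => by
      have hx0 : (0:ℝ) < x := by have := hx.1; linarith
      have hx1 : (0:ℝ) < 2*x - 1 := by have := hx.1; linarith
      have h1 : HasDerivAt Real.log x⁻¹ x := Real.hasDerivAt_log hx0.ne'
      have h2 : HasDerivAt (fun x : ℝ => 2*x - 1) 2 x := by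
        simpa using ((hasDerivAt_id x).const_mul 2).sub_const 1
      have h3 : HasDerivAt (fun x : ℝ => Real.log (2*x - 1)) (2/(2*x-1)) x := by
        have := h2.log hx1.ne'
        simpa using this
      have h4 : HasDerivAt (fun x : ℝ => 1/x) (-(x^2)⁻¹) x := by
        simpa [one_div] using hasDerivAt_inv hx0.ne'
      exact (((h1.sub h3).add_const 1).sub h4).neg.congr_deriv (by ring)
    )
    (fun x hx => by
      show -(x⁻¹ - 2/(2*x - 1) + (x^2)⁻¹) < 0
      have hx0 : (0:ℝ) < x := by have := hx.1; linarith
      have hx1 : (0:ℝ) < 2*x - 1 := by have := hx.1; linarith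
      have hx2 : (1:ℝ) < x := hx.1
      have e : x⁻¹ - 2/(2*x - 1) + (x^2)⁻¹ = (x - 1)/(x^2*(2*x-1)) := by
        rw [inv_eq_one_div, inv_eq_one_div, div_sub_div _ _ hx0.ne' hx1.ne', div_add_div _ _ (mul_ne_zero hx0.ne' hx1.ne') (by positivity), div_eq_div_iff (by positivity) (by positivity)]
        ring
      rw [e]
      have : 0 < (x - 1)/(x^2*(2*x-1)) :=
        div_pos (by linarith) (mul_pos (by positivity) hx1)
      linarith)
  simp only [Real.log_one] at key
  norm_num at key
  have h1 : 1/X = X⁻¹ := one_div X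
  linarith [key]

lemma phi_nonneg {X : ℝ} (hX : 1 < X) : 2 - 2/X ≤ Real.log (2*X - 1) := by
  have key := le_of_deriv_nonneg (A := 1) (B := X)
    (f := fun x => Real.log (2*x - 1) - 2 + 2/x)
    (f' := fun x => 2/(2*x - 1) + 2 * (-(x^2)⁻¹)) hX.le
    (fun x hx => by
      have hx0 : (0:ℝ) < x := by have := hx.1; linarith
      have hx1 : (0:ℝ) < 2*x - 1 := by have := hx.1; linarith
      have h2 : HasDerivAt (fun x : ℝ => 2*x - 1) 2 x := by
        simpa using ((hasDerivAt_id x).const_mul 2).sub_const 1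
      have h3 : HasDerivAt (fun x : ℝ => Real.log (2*x - 1)) (2/(2*x-1)) x := by
        have := h2.log hx1.ne'
        simpa using this
      have h4 : HasDerivAt (fun x : ℝ => 2/x) (2 * (-(x^2)⁻¹)) x := by
        simpa [div_eq_mul_inv, mul_comm] using (hasDerivAt_inv hx0.ne').const_mul 2
      exact ((h3.sub_const 2).add h4).congr_deriv (by ring)
    )
    (fun x hx => by
      show 0 ≤ 2/(2*x - 1) + 2 * (-(x^2)⁻¹)
      have hx0 : (0:ℝ) < x := by have := hx.1; linarith
      have hx1 : (0:ℝ) < 2*x - 1 := by have := hx.1; linarith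
      have hx2 : (1:ℝ) < x := hx.1
      have e : 2/(2*x - 1) + 2 * (-(x^2)⁻¹) = 2*(x-1)^2/(x^2*(2*x-1)) := by
        field_simp
        ring
      rw [e]
      positivity)
  norm_num at key
  linarith [key]

lemma logb_half : Real.logb 2 ((1:ℝ)/2) = -1 := by
  rw [one_div]
  rw [Real.logb, Real.log_inv]
  rw [div_eq_iff L_pos.ne']
  ring

lemma Phim_m1 : Phim (-1) = -1 := by
  rw [Phim, Real.rpow_neg_one]
  norm_num
  exact logb_half

lemma dPhim_m1 : dPhim (-1) = -1 := by
  rw [dPhim, Real.rpow_neg_one]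
  norm_num

lemma Em_m1_eq {Δ : ℝ} (hΔ : 0 < Δ) :
    Em (-1) Δ = (Real.log (2*(2:ℝ)^Δ - 1) - 2*Real.log ((2:ℝ)^Δ)) / Real.log 2 := by
  have hX : (0:ℝ) < (2:ℝ)^Δ := X_pos
  have hX1 : (1:ℝ) < (2:ℝ)^Δ := X_gt_one hΔ
  have h2e : (2:ℝ)^(-1-Δ:ℝ) = 1/(2*(2:ℝ)^Δ) := by
    rw [show (-1-Δ : ℝ) = (-1) + (-Δ) by ring, rp_add, Real.rpow_neg_one,
      Real.rpow_neg (by norm_num)]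
    field_simp
  have harg : 1 - (2:ℝ)^(-1-Δ:ℝ) = (2*(2:ℝ)^Δ - 1)/(2*(2:ℝ)^Δ) := by
    rw [h2e]
    field_simp
  have hPm1Δ : Phim (-1-Δ) =
      (Real.log (2*(2:ℝ)^Δ-1) - Real.log 2 - Real.log ((2:ℝ)^Δ))/Real.log 2 := by
    rw [Phim, harg, Real.logb, Real.log_div (by linarith) (by positivity),
      Real.log_mul (by norm_num) (by positivity)]
    ring
  have hY : Real.log ((2:ℝ)^Δ) = Δ * Real.log 2 := Real.log_rpow (by norm_num) Δ
  have hEm : Em (-1) Δ = Phim (-1 - Δ) - Phim (-1) + Δ * dPhim (-1) := rfl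
  rw [hEm, hPm1Δ, Phim_m1, dPhim_m1, hY]
  field_simp
  ring

noncomputable def NmE (Δ : ℝ) : ℝ :=
  2 * (2:ℝ) ^ Δ * Real.log ((2:ℝ) ^ Δ) - (2:ℝ) ^ Δ * Real.log (2 * (2:ℝ) ^ Δ - 1)

noncomputable def DmE (Δ : ℝ) : ℝ :=
  2 * (2:ℝ) ^ Δ * Real.log ((2:ℝ) ^ Δ) - 2 * (2:ℝ) ^ Δ * Real.log (2 * (2:ℝ) ^ Δ - 1)
    + 2 * (2:ℝ) ^ Δ - 2

lemma rStarM_eq (Δ : ℝ) : rStarM Δ = Real.logb 2 (NmE Δ / DmE Δ) := rfl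

lemma NmE_pos {Δ : ℝ} (hΔ : 0 < Δ) : 0 < NmE Δ := by
  have h := Nm_pos' (X_gt_one hΔ)
  have hX : (0:ℝ) < (2:ℝ)^Δ := X_pos
  rw [NmE]
  nlinarith

lemma DmE_pos {Δ : ℝ} (hΔ : 0 < Δ) : 0 < DmE Δ := by
  have h := mu_pos (X_gt_one hΔ)
  have hX : (0:ℝ) < (2:ℝ)^Δ := X_pos
  have hXX : (2:ℝ)^Δ * (1/(2:ℝ)^Δ) = 1 := by field_simp
  rw [DmE]
  nlinarith [mul_pos (mul_pos (by norm_num : (0:ℝ) < 2) hX) h]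

lemma Dm_le_Nm {Δ : ℝ} (hΔ : 0 < Δ) : DmE Δ ≤ NmE Δ := by
  have h := phi_nonneg (X_gt_one hΔ)
  have hX : (0:ℝ) < (2:ℝ)^Δ := X_pos
  have hXX : (2:ℝ)^Δ * (2/(2:ℝ)^Δ) = 2 := by field_simp
  rw [DmE, NmE]
  nlinarith [mul_le_mul_of_nonneg_left h hX.le]

lemma tstar_eq {Δ : ℝ} (hΔ : 0 < Δ) : (2:ℝ)^(-(rStarM Δ)) = DmE Δ / NmE Δ := by
  rw [rStarM_eq, Real.rpow_neg (by norm_num),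
    Real.rpow_logb (by norm_num) (by norm_num) (div_pos (NmE_pos hΔ) (DmE_pos hΔ)),
    inv_div]

lemma rstar_nonneg {Δ : ℝ} (hΔ : 0 < Δ) : 0 ≤ rStarM Δ := by
  rw [rStarM_eq]
  apply Real.logb_nonneg (by norm_num)
  rw [le_div_iff₀ (DmE_pos hΔ)]
  linarith [Dm_le_Nm hΔ]

lemma fm_Delta_eq {Δ : ℝ} : fm Δ = ((2:ℝ)^Δ)⁻¹ + Δ * Real.log 2 - 1 := by
  rw [fm, Real.rpow_neg (by norm_num)]

lemma hstar {Δ : ℝ} (hΔ : 0 < Δ) :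
    fm Δ = (1 - (2:ℝ)^(-(rStarM Δ))/2) * Real.log 2 * (-(Em (-1) Δ)) := by
  have hX : (0:ℝ) < (2:ℝ)^Δ := X_pos
  have hY : Real.log ((2:ℝ)^Δ) = Δ * Real.log 2 := Real.log_rpow (by norm_num) Δ
  have hNpos := NmE_pos hΔ
  have hN' : NmE Δ ≠ 0 := hNpos.ne'
  rw [tstar_eq hΔ, Em_m1_eq hΔ, fm_Delta_eq]
  rw [NmE, DmE] at *
  rw [hY] at *
  have hF : 0 < 2 * (Δ * Real.log 2) - Real.log (2 * 2 ^ Δ - 1) := by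
    by_contra hc; push_neg at hc; nlinarith
  field_simp
  have hF' : 0 < Δ * Real.log 2 * 2 - Real.log (2 ^ Δ * 2 - 1) := by
    rw [mul_comm ((2:ℝ)^Δ) 2]; linarith
  field_simp [hF'.ne']
  ring

lemma Dt_min {Δ : ℝ} (hΔ : 0 < Δ) {s : ℝ} (hs : 0 ≤ s) :
    Em (-1) (rStarM Δ) * fm Δ - fm (rStarM Δ) * Em (-1) Δ ≤
      Em (-1) s * fm Δ - fm s * Em (-1) Δ := by
  have hR0 : 0 ≤ rStarM Δ := rstar_nonneg hΔ
  have hEΔ : Em (-1) Δ < 0 := Em_neg (by norm_num) hΔ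
  have hA : 0 < -(Em (-1) Δ) := by linarith
  have hT1 : (2:ℝ)^(-(rStarM Δ)) ≤ 1 := rp_le_one (by linarith)
  have hT0 : 0 < (2:ℝ)^(-(rStarM Δ)) := rp_pos _
  have hderiv : ∀ x : ℝ, 0 ≤ x →
      HasDerivAt (fun z => Em (-1) z * fm Δ - fm z * Em (-1) Δ)
        ((dPhim (-1) - dPhim (-1 - x)) * fm Δ -
          Real.log 2 * (1 - (2:ℝ)^(-x)) * Em (-1) Δ) x := by
    intro x hx
    exact (((hasDerivAt_Em (by norm_num) hx).mul_const (fm Δ)).sub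
      ((hasDerivAt_fm x).mul_const (Em (-1) Δ))).congr_deriv (by ring)
  rcases le_total s (rStarM Δ) with hcase|hcase
  · have := le_of_deriv_nonpos (A := s) (B := rStarM Δ)
      (f := fun z => Em (-1) z * fm Δ - fm z * Em (-1) Δ)
      (f' := fun x => (dPhim (-1) - dPhim (-1 - x)) * fm Δ -
        Real.log 2 * (1 - (2:ℝ)^(-x)) * Em (-1) Δ) hcase
      (fun x hx => hderiv x (le_trans hs hx.1))
      (fun x hx => by
        show (dPhim (-1) - dPhim (-1 - x)) * fm Δ -
          Real.log 2 * (1 - (2:ℝ)^(-x)) * Em (-1) Δ ≤ 0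
        have hx0 : 0 ≤ x := le_trans hs hx.1.le
        have ht1 : (2:ℝ)^(-x) ≤ 1 := rp_le_one (by linarith)
        have hhalf : (0:ℝ) < 1 - (2:ℝ)^(-x)/2 := by linarith [rp_pos (-x)]
        have htT : (2:ℝ)^(-(rStarM Δ)) ≤ (2:ℝ)^(-x) := rp_mono (by linarith [hx.2])
        rw [Er_m1_eq hx0, hstar hΔ, div_mul_eq_mul_div, sub_nonpos, div_le_iff₀ hhalf]
        nlinarith [mul_nonneg (mul_nonneg (mul_pos L_pos hA).le
          (by linarith : (0:ℝ) ≤ 1 - (2:ℝ)^(-x)))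
          (by linarith : (0:ℝ) ≤ (2:ℝ)^(-x) - (2:ℝ)^(-(rStarM Δ)))])
    exact this
  · have := le_of_deriv_nonneg (A := rStarM Δ) (B := s)
      (f := fun z => Em (-1) z * fm Δ - fm z * Em (-1) Δ)
      (f' := fun x => (dPhim (-1) - dPhim (-1 - x)) * fm Δ -
        Real.log 2 * (1 - (2:ℝ)^(-x)) * Em (-1) Δ) hcase
      (fun x hx => hderiv x (le_trans hR0 hx.1))
      (fun x hx => by
        show 0 ≤ (dPhim (-1) - dPhim (-1 - x)) * fm Δ -
          Real.log 2 * (1 - (2:ℝ)^(-x)) * Em (-1) Δ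
        have hx0 : 0 ≤ x := le_trans hR0 hx.1.le
        have ht1 : (2:ℝ)^(-x) ≤ 1 := rp_le_one (by linarith)
        have hhalf : (0:ℝ) < 1 - (2:ℝ)^(-x)/2 := by linarith [rp_pos (-x)]
        have htT : (2:ℝ)^(-x) ≤ (2:ℝ)^(-(rStarM Δ)) := rp_mono (by linarith [hx.1])
        rw [Er_m1_eq hx0, hstar hΔ, div_mul_eq_mul_div, sub_nonneg, le_div_iff₀ hhalf]
        nlinarith [mul_nonneg (mul_nonneg (mul_pos L_pos hA).le
          (by linarith : (0:ℝ) ≤ 1 - (2:ℝ)^(-x)))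
          (by linarith : (0:ℝ) ≤ (2:ℝ)^(-(rStarM Δ)) - (2:ℝ)^(-x))])
    exact this

lemma QmInf_eq (Δ r : ℝ) : QmInf Δ r = fm r / fm Δ := rfl

lemma QmMax_eq (Δ r : ℝ) : QmMax Δ r = Em (-1) r / Em (-1) Δ := rfl

lemma D_le_Dstar {Δ : ℝ} (hΔ : 0 < Δ) {s : ℝ} (hs : 0 ≤ s) :
    QmMax Δ s - QmInf Δ s ≤ QmMax Δ (rStarM Δ) - QmInf Δ (rStarM Δ) := by
  have h := Dt_min hΔ hs
  have hEΔ : Em (-1) Δ < 0 := Em_neg (by norm_num) hΔ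
  have hfΔ : 0 < fm Δ := fm_pos hΔ
  have hEF : Em (-1) Δ * fm Δ < 0 := mul_neg_of_neg_of_pos hEΔ hfΔ
  have h2 := div_le_div_of_nonpos_of_le hEF.le h
  have e : ∀ z : ℝ, (Em (-1) z * fm Δ - fm z * Em (-1) Δ)/(Em (-1) Δ * fm Δ) =
      Em (-1) z / Em (-1) Δ - fm z / fm Δ := by
    intro z
    field_simp [hEΔ.ne, hfΔ.ne']
  rw [e, e] at h2
  rw [QmInf_eq, QmInf_eq, QmMax_eq, QmMax_eq]
  exact h2

/-- compare divisions with two negative denominators -/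
lemma div_le_div_negden {a b c d : ℝ} (hb : b < 0) (hd : d < 0) (h : a*d ≤ c*b) :
    a/b ≤ c/d := by
  have hbd : 0 < b*d := mul_pos_of_neg_of_neg hb hd
  have e : c/d - a/b = (c*b - a*d)/(b*d) := by
    field_simp [hb.ne, hd.ne]
  have : 0 ≤ (c*b - a*d)/(b*d) := div_nonneg (by linarith) hbd.le
  linarith [e ▸ this]

/-- compare divisions, positive and negative denominator -/
lemma div_le_div_posneg {a b c d : ℝ} (hb : 0 < b) (hd : d < 0) (h : c*b ≤ a*d) :
    a/b ≤ c/d := by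
  have hbd : b*d < 0 := mul_neg_of_pos_of_neg hb hd
  have e : c/d - a/b = (c*b - a*d)/(b*d) := by
    field_simp [hb.ne', hd.ne]
  have : 0 ≤ (c*b - a*d)/(b*d) := div_nonneg_of_nonpos (by linarith) hbd.le
  linarith [e ▸ this]

lemma Q_le_QmMax {Δ i r : ℝ} (hΔ : 0 < Δ) (hi : i ≤ -1) (hr0 : 0 ≤ r) (hrΔ : r ≤ Δ) :
    Qm Δ i r ≤ QmMax Δ r := by
  have hi0 : i < 0 := by linarith
  have h := upperQ hi hr0 hrΔ hΔ
  have hEiΔ : Em i Δ < 0 := Em_neg hi0 hΔ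
  have hEmΔ : Em (-1) Δ < 0 := Em_neg (by norm_num) hΔ
  rw [QmMax_eq, Qm]
  exact div_le_div_negden hEiΔ hEmΔ (by linarith [h])

lemma QmInf_le_Q {Δ i r : ℝ} (hΔ : 0 < Δ) (hi : i < 0) (hr0 : 0 ≤ r) (hrΔ : r ≤ Δ) :
    QmInf Δ r ≤ Qm Δ i r := by
  have h := lowerQ hi hr0 hrΔ
  have hEiΔ : Em i Δ < 0 := Em_neg hi hΔ
  have hfΔ : 0 < fm Δ := fm_pos hΔ
  rw [QmInf_eq, Qm]
  exact div_le_div_posneg hfΔ hEiΔ (by linarith [h])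

end LNSaux

open LNSaux in
theorem stmt_15 (ε Δ ΔP : ℝ) (hε : 0 ≤ ε) (hΔ : 0 < Δ) (hΔP : 0 < ΔP) (hΔPΔ : ΔP ≤ Δ)
    (i c r rhat : ℝ) (hi : i ≤ -1) (hc : c ≤ -1)
    (hrhat0 : 0 ≤ rhat) (hrhatr : rhat ≤ r) (hrΔ : r < Δ) (hround : r - rhat ≤ ΔP)
    (a b e p m q : ℝ)
    (ha : |a - Phim i| ≤ ε)
    (hb : |b - dPhim i| ≤ ε)
    (he : |e - Em i Δ| ≤ ε)
    (hp : |p - Qm Δ c rhat| ≤ ε)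
    (hp1 : |p| ≤ 1)
    (hm : |m - r * b| ≤ ε)
    (hq : |q - e * p| ≤ ε) :
    |Phim (i - r) - (a - m + q)| ≤
      (4 + Δ) * ε +
        (-Em (-1) Δ) * ((QmMax Δ (rStarM Δ) - QmInf Δ (rStarM Δ))
          + (1 - QmInf Δ (Δ - ΔP)) + ε) := by
  have hi0 : i < 0 := by linarith
  have hc0 : c < 0 := by linarith
  have hr0 : 0 ≤ r := le_trans hrhat0 hrhatr
  have hEiΔ : Em i Δ < 0 := Em_neg hi0 hΔ
  have hEmΔ : Em (-1) Δ < 0 := Em_neg (by norm_num) hΔ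
  have hfΔ : 0 < fm Δ := fm_pos hΔ
  have hEmono : Em (-1) Δ ≤ Em i Δ := Em_i_mono hi hΔ
  have hfm1 : fm (Δ - ΔP) ≤ fm Δ := fm_mono (by linarith) (by linarith)
  have hQI : 0 ≤ 1 - QmInf Δ (Δ - ΔP) := by
    rw [QmInf_eq]
    have : fm (Δ - ΔP)/fm Δ ≤ 1 := by rw [div_le_one hfΔ]; exact hfm1
    linarith
  have hQir_ub : Qm Δ i r ≤ QmMax Δ r := Q_le_QmMax hΔ hi hr0 hrΔ.le
  have hQir_lb : QmInf Δ r ≤ Qm Δ i r := QmInf_le_Q hΔ hi0 hr0 hrΔ.le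
  have hQc_ub : Qm Δ c rhat ≤ QmMax Δ rhat := Q_le_QmMax hΔ hc hrhat0 (by linarith)
  have hQc_lb : QmInf Δ rhat ≤ Qm Δ c rhat := QmInf_le_Q hΔ hc0 hrhat0 (by linarith)
  have hD_r := D_le_Dstar hΔ hr0
  have hD_rhat := D_le_Dstar hΔ hrhat0
  have hQinf_mono : QmInf Δ rhat ≤ QmInf Δ r := by
    rw [QmInf_eq, QmInf_eq]
    exact (div_le_div_iff_of_pos_right hfΔ).mpr (fm_mono hrhat0 hrhatr)
  have hQinf_inc : QmInf Δ r - QmInf Δ rhat ≤ 1 - QmInf Δ (Δ - ΔP) := by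
    rw [QmInf_eq, QmInf_eq, QmInf_eq]
    have hinc := fm_increment hrhat0 hrhatr hrΔ.le
    have h2 : fm (Δ - ΔP) ≤ fm (Δ - (r - rhat)) := fm_mono (by linarith) (by linarith)
    have e : (1:ℝ) - fm (Δ - ΔP)/fm Δ = (fm Δ - fm (Δ - ΔP))/fm Δ := by
      field_simp
    rw [← sub_div, e]
    exact (div_le_div_iff_of_pos_right hfΔ).mpr (by linarith)
  have habsQ : |Qm Δ i r - Qm Δ c rhat| ≤
      (QmMax Δ (rStarM Δ) - QmInf Δ (rStarM Δ)) + (1 - QmInf Δ (Δ - ΔP)) := by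
    rw [abs_sub_le_iff]
    constructor
    · linarith
    · linarith
  have hQmEq : Em i Δ * Qm Δ i r = Em i r := by
    have h : Qm Δ i r = Em i r / Em i Δ := rfl
    rw [h, mul_comm, div_mul_cancel₀ _ hEiΔ.ne]
  have hkey : Phim (i - r) - (a - m + q) =
      (Phim i - a) + (m - r*b) + r*(b - dPhim i) + (e*p - q) + p*(Em i Δ - e) +
        Em i Δ * (Qm Δ i r - p) := by
    have hEm : Em i r = Phim (i-r) - Phim i + r * dPhim i := rfl
    have h2 : Em i Δ * (Qm Δ i r - p) = Em i r - Em i Δ * p := by rw [mul_sub, hQmEq]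
    rw [h2, hEm]
    ring
  rw [hkey]
  have t1 : |Phim i - a| ≤ ε := by rwa [abs_sub_comm]
  have t3 : |r*(b - dPhim i)| ≤ Δ * ε := by
    rw [abs_mul, abs_of_nonneg hr0]
    exact mul_le_mul hrΔ.le hb (abs_nonneg _) (by linarith)
  have t4 : |e*p - q| ≤ ε := by rwa [abs_sub_comm]
  have t5 : |p*(Em i Δ - e)| ≤ ε := by
    rw [abs_mul]
    calc |p| * |Em i Δ - e| ≤ 1 * ε :=
          mul_le_mul hp1 (by rwa [abs_sub_comm]) (abs_nonneg _) (by norm_num)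
      _ = ε := one_mul ε
  have t6 : |Em i Δ * (Qm Δ i r - p)| ≤
      (-(Em (-1) Δ)) * ((QmMax Δ (rStarM Δ) - QmInf Δ (rStarM Δ))
        + (1 - QmInf Δ (Δ - ΔP)) + ε) := by
    rw [abs_mul]
    have h1 : |Em i Δ| ≤ -(Em (-1) Δ) := by
      rw [abs_of_neg hEiΔ]; linarith
    have h2 : |Qm Δ i r - p| ≤ (QmMax Δ (rStarM Δ) - QmInf Δ (rStarM Δ))
        + (1 - QmInf Δ (Δ - ΔP)) + ε := by
      have h3 := abs_sub_le (Qm Δ i r) (Qm Δ c rhat) p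
      have h4 : |Qm Δ c rhat - p| ≤ ε := by rwa [abs_sub_comm]
      linarith
    exact mul_le_mul h1 h2 (abs_nonneg _) (by linarith)
  have habs := abs_add_le ((Phim i - a) + (m - r*b) + r*(b - dPhim i) + (e*p - q) +
      p*(Em i Δ - e)) (Em i Δ * (Qm Δ i r - p))
  have habs2 := abs_add_le ((Phim i - a) + (m - r*b) + r*(b - dPhim i) + (e*p - q))
      (p*(Em i Δ - e))
  have habs3 := abs_add_le ((Phim i - a) + (m - r*b) + r*(b - dPhim i)) (e*p - q)
  have habs4 := abs_add_le ((Phim i - a) + (m - r*b)) (r*(b - dPhim i))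
  have habs5 := abs_add_le (Phim i - a) (m - r*b)
  have hfinal : (4 + Δ) * ε = ε + ε + Δ * ε + ε + ε := by ring
  linarith
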